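/- Let X be a Polish space. Then X is σ-compact if and only if the c-height of X is countable, i.e., there is an ordinal α < ω₁ with X_c^{[α]} = ∅, where X_c^{[·]} is the c-derivative. -/

import Mathlib

/-- `J(Y)`: the union of all subsets of `Y` which are open in `Y` and have
compact closure in `Y`. -/
def cKernel {X : Type*} [TopologicalSpace X] (Y : Set X) : Set X :=
  ⋃₀ {U : Set X | U ⊆ Y ∧ (∃ V : Set X, IsOpen V ∧ U = V ∩ Y) ∧
      IsCompact (closure (Subtype.val ⁻¹' U : Set ↥Y))}

/-- The `α`-th c-derivative `X_c^{[α]}`. -/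
noncomputable def cDeriv (X : Type*) [TopologicalSpace X] (α : Ordinal) : Set X :=
  Ordinal.limitRecOn α Set.univ (fun _ S => S \ cKernel S)
    (fun o _ ih => ⋂ β, ⋂ h : β < o, ih β h)

open Set Topology TopologicalSpace

section Aux

variable {X : Type*} [TopologicalSpace X]

lemma cKernel_subset (Y : Set X) : cKernel Y ⊆ Y := by
  rintro x ⟨U, ⟨hUY, _, _⟩, hxU⟩; exact hUY hxU

lemma exists_isOpen_cKernel (Y : Set X) : ∃ W : Set X, IsOpen W ∧ cKernel Y = W ∩ Y := by
  classical
  choose! V hVopen hVeq using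
    fun (U : Set X) (hU : U ∈ {U : Set X | U ⊆ Y ∧ (∃ V : Set X, IsOpen V ∧ U = V ∩ Y) ∧
      IsCompact (closure (Subtype.val ⁻¹' U : Set ↥Y))}) => hU.2.1
  refine ⟨⋃ U ∈ {U : Set X | U ⊆ Y ∧ (∃ V : Set X, IsOpen V ∧ U = V ∩ Y) ∧
      IsCompact (closure (Subtype.val ⁻¹' U : Set ↥Y))}, V U,
    isOpen_iUnion fun U => isOpen_iUnion fun hU => hVopen U hU, ?_⟩
  ext x
  constructor
  · rintro ⟨U, hU, hxU⟩
    have hx' : x ∈ V U ∩ Y := (hVeq U hU) ▸ hxU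
    exact ⟨mem_biUnion hU hx'.1, hU.1 hxU⟩
  · rintro ⟨hxW, hxY⟩
    obtain ⟨U, hU, hxV⟩ := mem_iUnion₂.mp hxW
    exact ⟨U, hU, (hVeq U hU).symm ▸ ⟨hxV, hxY⟩⟩

lemma cDeriv_zero : cDeriv X 0 = Set.univ := Ordinal.limitRecOn_zero _ _ _

lemma cDeriv_succ (α : Ordinal) :
    cDeriv X (Order.succ α) = cDeriv X α \ cKernel (cDeriv X α) :=
  Ordinal.limitRecOn_succ _ _ _ _

lemma cDeriv_limit {α : Ordinal} (h : Order.IsSuccLimit α) :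
    cDeriv X α = ⋂ β, ⋂ _ : β < α, cDeriv X β :=
  Ordinal.limitRecOn_limit _ _ _ _ h

lemma cDeriv_le {α β : Ordinal} (h : α ≤ β) : cDeriv X β ⊆ cDeriv X α := by
  induction β using Ordinal.limitRecOn with
  | zero => rw [nonpos_iff_eq_zero.mp h]
  | add_one γ ih =>
    rw [Ordinal.add_one_eq_succ] at h ⊢
    rcases h.lt_or_eq with h' | h'
    · rw [cDeriv_succ]
      exact (diff_subset).trans (ih (Order.lt_succ_iff.mp h'))
    · rw [h']
  | limit γ hγ ih =>
    rcases h.lt_or_eq with h' | h'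
    · rw [cDeriv_limit hγ]
      exact iInter_subset_of_subset α (iInter_subset _ h')
    · rw [h']

lemma isClosed_cDeriv (α : Ordinal) : IsClosed (cDeriv X α) := by
  induction α using Ordinal.limitRecOn with
  | zero => rw [cDeriv_zero]; exact isClosed_univ
  | add_one γ ih =>
    rw [Ordinal.add_one_eq_succ]
    obtain ⟨W, hW, hWeq⟩ := exists_isOpen_cKernel (cDeriv X γ)
    have : cDeriv X γ \ cKernel (cDeriv X γ) = cDeriv X γ ∩ Wᶜ := by
      rw [hWeq]; ext y; simp only [mem_diff, mem_inter_iff, mem_compl_iff]; tauto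
    rw [cDeriv_succ, this]
    exact ih.inter (isClosed_compl_iff.mpr hW)
  | limit γ hγ ih =>
    rw [cDeriv_limit hγ]
    exact isClosed_iInter fun β => isClosed_iInter fun hβ => ih β hβ

lemma cKernel_nonempty [PolishSpace X] [SigmaCompactSpace X] {Y : Set X}
    (hY : IsClosed Y) (hne : Y.Nonempty) : (cKernel Y).Nonempty := by
  haveI : PolishSpace Y := hY.polishSpace
  letI := upgradeIsCompletelyMetrizable ↥Y
  haveI : Nonempty ↥Y := hne.to_subtype
  have hcpt : ∀ n : ℕ, IsCompact (Subtype.val ⁻¹' (compactCovering X n) : Set ↥Y) := fun n =>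
    Topology.IsInducing.subtypeVal.isCompact_preimage
      (by rwa [Subtype.range_val]) (isCompact_compactCovering X n)
  have hU : ⋃ n, (Subtype.val ⁻¹' (compactCovering X n) : Set ↥Y) = Set.univ := by
    rw [← Set.preimage_iUnion, iUnion_compactCovering]
    exact Set.preimage_univ
  obtain ⟨n, y, hy⟩ := nonempty_interior_of_iUnion_of_closed
    (fun n => (hcpt n).isClosed) hU
  obtain ⟨V, hV, hVW⟩ := isOpen_induced_iff.mp
    (isOpen_interior : IsOpen (interior (Subtype.val ⁻¹' (compactCovering X n) : Set ↥Y)))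
  have hpre : (Subtype.val ⁻¹' (V ∩ Y) : Set ↥Y) =
      interior (Subtype.val ⁻¹' (compactCovering X n) : Set ↥Y) := by
    rw [preimage_inter, hVW, Subtype.coe_preimage_self, inter_univ]
  refine ⟨y.1, V ∩ Y, ⟨inter_subset_right, ⟨V, hV, rfl⟩, ?_⟩, ?_⟩
  · rw [hpre]
    exact (hcpt n).of_isClosed_subset isClosed_closure
      (closure_minimal interior_subset (hcpt n).isClosed)
  · have : y ∈ (Subtype.val ⁻¹' V : Set ↥Y) := by rw [hVW]; exact hy
    exact ⟨this, y.2⟩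

lemma cKernel_subset_sUnion_compact [SecondCountableTopology X] (Y : Set X) :
    ∃ K : Set (Set X), K.Countable ∧ (∀ k ∈ K, IsCompact k) ∧ cKernel Y ⊆ ⋃₀ K := by
  classical
  set F : Set (Set X) := {U : Set X | U ⊆ Y ∧ (∃ V : Set X, IsOpen V ∧ U = V ∩ Y) ∧
      IsCompact (closure (Subtype.val ⁻¹' U : Set ↥Y))} with hF
  set S : Set (Set ↥Y) := (fun U => Subtype.val ⁻¹' U) '' F with hS
  have hSopen : ∀ s ∈ S, IsOpen s := by
    rintro s ⟨U, hU, rfl⟩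
    obtain ⟨V, hV, rfl⟩ := hU.2.1
    show IsOpen (Subtype.val ⁻¹' (V ∩ Y) : Set ↥Y)
    rw [preimage_inter, Subtype.coe_preimage_self, inter_univ]
    exact hV.preimage continuous_subtype_val
  obtain ⟨T, hTc, hTS, hTu⟩ := isOpen_sUnion_countable S hSopen
  refine ⟨(fun t => Subtype.val '' closure t) '' T, hTc.image _, ?_, ?_⟩
  · rintro k ⟨t, htT, rfl⟩
    obtain ⟨U, hU, rfl⟩ := hTS htT
    exact hU.2.2.image continuous_subtype_val
  · rintro x ⟨U, hU, hxU⟩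
    have hxY : x ∈ Y := hU.1 hxU
    have hmemS : (⟨x, hxY⟩ : ↥Y) ∈ ⋃₀ S := ⟨Subtype.val ⁻¹' U, ⟨U, hU, rfl⟩, hxU⟩
    rw [← hTu] at hmemS
    obtain ⟨t, htT, hxt⟩ := hmemS
    exact ⟨Subtype.val '' closure t, ⟨t, htT, rfl⟩, ⟨⟨x, hxY⟩, subset_closure hxt, rfl⟩⟩

end Aux

/-- A Polish space is σ-compact iff its c-height is countable. -/
theorem sigmaCompact_iff_c_height_countable
    (X : Type*) [TopologicalSpace X] [PolishSpace X] :
    SigmaCompactSpace X ↔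
      ∃ α : Ordinal, α < (Cardinal.aleph 1).ord ∧ cDeriv X α = ∅ := by
  classical
  constructor
  · intro hsc
    by_contra h
    push_neg at h
    -- for every countable α, the derivative is nonempty, hence its kernel is nonempty
    have key : ∀ a : ↥(Iio ((Cardinal.aleph 1).ord)), ∃ b ∈ countableBasis X,
        (∃ x, x ∈ b ∧ x ∈ cDeriv X a.1) ∧ b ⊆ (cDeriv X (Order.succ a.1))ᶜ := by
      rintro ⟨α, hα⟩
      have hne : (cDeriv X α).Nonempty := h α hα
      obtain ⟨x, hx⟩ := cKernel_nonempty (isClosed_cDeriv α) hne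
      have hx1 : x ∈ cDeriv X α := cKernel_subset _ hx
      have hx2 : x ∈ (cDeriv X (Order.succ α))ᶜ := by
        rw [cDeriv_succ]; exact fun hc => hc.2 hx
      obtain ⟨b, hb, hxb, hbsub⟩ := (isBasis_countableBasis X).exists_subset_of_mem_open hx2
        (isClosed_cDeriv (Order.succ α)).isOpen_compl
      exact ⟨b, hb, ⟨x, hxb, hx1⟩, hbsub⟩
    choose b hbmem hbx hbsub using key
    have hinj : Function.Injective fun a => (⟨b a, hbmem a⟩ : ↥(countableBasis X)) := by
      intro a a' hbb
      simp only [Subtype.mk.injEq] at hbb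
      by_contra hne
      have hne' : a.1 ≠ a'.1 := fun hc => hne (Subtype.ext hc)
      rcases hne'.lt_or_gt with hlt | hlt
      · obtain ⟨x, hxb, hxd⟩ := hbx a'
        have hmem : x ∈ cDeriv X (Order.succ a.1) :=
          cDeriv_le (Order.succ_le_of_lt hlt) hxd
        have hxba : x ∈ b a := by rw [hbb]; exact hxb
        exact hbsub a hxba hmem
      · obtain ⟨x, hxb, hxd⟩ := hbx a
        have hmem : x ∈ cDeriv X (Order.succ a'.1) :=
          cDeriv_le (Order.succ_le_of_lt hlt) hxd
        have hxba : x ∈ b a' := by rw [← hbb]; exact hxb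
        exact hbsub a' hxba hmem
    haveI : Countable ↥(countableBasis X) := (countable_countableBasis X).to_subtype
    haveI := hinj.countable
    have hle : Cardinal.mk ↥(Iio ((Cardinal.aleph 1).ord)) ≤ Cardinal.aleph0 := Cardinal.mk_le_aleph0
    rw [Ordinal.mk_Iio_ordinal, Cardinal.card_ord, Cardinal.lift_le_aleph0] at hle
    exact (Cardinal.aleph0_lt_aleph_one.not_ge) hle
  · rintro ⟨α, hα, hempty⟩
    choose K hKc hKcpt hKsub using fun β : Ordinal => cKernel_subset_sUnion_compact (cDeriv X β)
    have hIio : (Iio α).Countable := by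
      rw [← Cardinal.le_aleph0_iff_set_countable, Ordinal.mk_Iio_ordinal, Cardinal.lift_le_aleph0]
      have := Cardinal.lt_ord.mp hα
      rwa [← Cardinal.succ_aleph0, Order.lt_succ_iff] at this
    set S : Set (Set X) := ⋃ β ∈ Iio α, K β with hSdef
    have hScount : S.Countable := hIio.biUnion fun β _ => hKc β
    have hScpt : ∀ k ∈ S, IsCompact k := by
      rintro k hk
      simp only [hSdef, mem_iUnion] at hk
      obtain ⟨β, _, hkK⟩ := hk
      exact hKcpt β k hkK
    have hcover : (univ : Set X) = ⋃ k : ↥S, (k : Set X) := by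
      apply Subset.antisymm
      · intro x _
        -- find the first ordinal where x leaves the derivative
        have hxα : x ∉ cDeriv X α := by rw [hempty]; exact notMem_empty x
        obtain ⟨γ, hγP, hγmin⟩ := Ordinal.lt_wf.has_min {γ | x ∉ cDeriv X γ} ⟨α, hxα⟩
        have hγle : γ ≤ α := not_lt.mp fun hc => hγmin α hxα hc
        rcases Ordinal.zero_or_succ_or_isSuccLimit γ with h0 | ⟨δ, hδ⟩ | hlim
        · exact absurd (by rw [h0, cDeriv_zero]; exact mem_univ x) hγP
        · subst hδ
          have hδγ : δ < Order.succ δ := Order.lt_succ δ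
          have hxδ : x ∈ cDeriv X δ := not_not.mp fun hc => hγmin δ hc hδγ
          have hxk : x ∈ cKernel (cDeriv X δ) := by
            by_contra hc
            exact hγP (by rw [cDeriv_succ]; exact ⟨hxδ, hc⟩)
          obtain ⟨k, hkK, hxkk⟩ := hKsub δ hxk
          have hkS : k ∈ S := by
            simp only [hSdef, mem_iUnion]
            exact ⟨δ, hδγ.trans_le hγle, hkK⟩
          exact mem_iUnion.mpr ⟨⟨k, hkS⟩, hxkk⟩
        · exfalso
          apply hγP
          rw [cDeriv_limit hlim]
          exact mem_iInter.mpr fun β => mem_iInter.mpr fun hβ =>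
            not_not.mp fun hc => hγmin β hc hβ
      · exact subset_univ _
    haveI : Countable ↥S := hScount.to_subtype
    rw [← isSigmaCompact_univ_iff, hcover]
    exact isSigmaCompact_iUnion_of_isCompact _ fun k => hScpt k.1 k.2
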